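/- arXiv:1503.00283 — 2 statements merged into one kernel-verified Lean document; each statement's English description precedes it below -/
import Mathlib

section
/- Let û, v̂, φ̂ be real numbers with φ̂ > 0, g > 0, û > 0, v̂ > 0, û² − gφ̂ > 0 and v̂² − gφ̂ > 0. With E₁⁰ and E₂⁰ as in the supercritical modified SWE system, define κ₀ = √(g(û² + v̂² − gφ̂)/φ̂). Then the eigenvalues of the matrix (E₂⁰)⁻¹E₁⁰ are λ₁ = (ûv̂ + φ̂κ₀)/(v̂² − gφ̂), λ₂ = (ûv̂ − φ̂κ₀)/(v̂² − gφ̂), λ₃ = û/v̂, and all three are strictly positive. -/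
open Matrix Polynomial

set_option maxHeartbeats 1000000

/-- the eigenvalues of `(E₂⁰)⁻¹ E₁⁰` in the supercritical regime
are `λ₁ = (ûv̂ + φ̂κ₀)/(v̂² − gφ̂)`, `λ₂ = (ûv̂ − φ̂κ₀)/(v̂² − gφ̂)`, `λ₃ = û/v̂`
(stated via the factorization of the characteristic polynomial), and all three
are strictly positive. -/
theorem stmt_4 (g u v φ : ℝ) (hφ : 0 < φ) (hg : 0 < g) (hu : 0 < u) (hv : 0 < v)
    (h1 : 0 < u ^ 2 - g * φ) (h2 : 0 < v ^ 2 - g * φ) :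
    let κ₀ : ℝ := Real.sqrt (g * (u ^ 2 + v ^ 2 - g * φ) / φ)
    let E₁ : Matrix (Fin 3) (Fin 3) ℝ :=
      !![u, 0, Real.sqrt (g * φ); 0, u, 0; Real.sqrt (g * φ), 0, u]
    let E₂ : Matrix (Fin 3) (Fin 3) ℝ :=
      !![v, 0, 0; 0, v, Real.sqrt (g * φ); 0, Real.sqrt (g * φ), v]
    let l₁ : ℝ := (u * v + φ * κ₀) / (v ^ 2 - g * φ)
    let l₂ : ℝ := (u * v - φ * κ₀) / (v ^ 2 - g * φ)
    let l₃ : ℝ := u / v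
    (E₂⁻¹ * E₁).charpoly = (X - C l₁) * (X - C l₂) * (X - C l₃) ∧
      0 < l₁ ∧ 0 < l₂ ∧ 0 < l₃ := by
  intro κ₀ E₁ E₂ l₁ l₂ l₃
  set s := Real.sqrt (g*φ) with hsdef
  have hs2 : s^2 = g*φ := Real.sq_sqrt (by positivity)
  have hd : v^2 - s^2 ≠ 0 := by rw [hs2]; exact ne_of_gt h2
  have hd' : v^2 - g*φ ≠ 0 := ne_of_gt h2
  have hv0 : v ≠ 0 := ne_of_gt hv
  have hφ0 : φ ≠ 0 := ne_of_gt hφ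
  have hk0 : 0 ≤ κ₀ := Real.sqrt_nonneg _
  have hk2 : κ₀^2 * φ = g*(u^2+v^2-g*φ) := by
    have hnum : 0 ≤ g*(u^2+v^2-g*φ)/φ := by
      have : 0 < u^2+v^2-g*φ := by nlinarith
      positivity
    show (Real.sqrt _)^2 * φ = _
    rw [Real.sq_sqrt hnum]; field_simp
  have hsq : (φ*κ₀)^2 = (u*v)^2 - (u^2-g*φ)*(v^2-g*φ) := by
    linear_combination φ * hk2
  have huvk : φ*κ₀ < u*v := by
    nlinarith [mul_pos h1 h2, mul_nonneg hφ.le hk0, mul_pos hu hv]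
  have hl1 : 0 < l₁ := div_pos (by nlinarith [mul_pos hu hv, mul_nonneg hφ.le hk0]) h2
  have hl2 : 0 < l₂ := div_pos (by linarith) h2
  have hl3 : 0 < l₃ := div_pos hu hv
  refine ⟨?_, hl1, hl2, hl3⟩
  have hB : E₂⁻¹ = !![1/v, 0, 0; 0, v/(v^2-g*φ), -s/(v^2-g*φ);
                     0, -s/(v^2-g*φ), v/(v^2-g*φ)] := by
    refine Matrix.inv_eq_left_inv ?_
    show _ * !![v, 0, 0; 0, v, s; 0, s, v] = _
    ext i j
    fin_cases i <;> fin_cases j <;>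
      simp [Matrix.mul_apply, Fin.sum_univ_three, Matrix.vecHead, Matrix.vecTail, ← hs2] <;>
        field_simp <;> (first | ring1 | (left; ring1) | trivial)
  have hA : E₂⁻¹ * E₁ = !![u/v, 0, s/v;
      -(s^2)/(v^2-g*φ), u*v/(v^2-g*φ), -(s*u)/(v^2-g*φ);
      v*s/(v^2-g*φ), -(s*u)/(v^2-g*φ), u*v/(v^2-g*φ)] := by
    rw [hB]
    show _ * !![u, 0, s; 0, u, 0; s, 0, u] = _
    ext i j
    fin_cases i <;> fin_cases j <;>
      simp [Matrix.mul_apply, Fin.sum_univ_three, Matrix.vecHead, Matrix.vecTail] <;>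
        field_simp <;> (first | ring1 | (left; ring1) | trivial)
  apply Polynomial.funext
  intro r
  rw [hA, Matrix.charpoly, ← Polynomial.coe_evalRingHom, RingHom.map_det]
  simp [Matrix.det_fin_three, charmatrix_apply, Matrix.map_apply, Matrix.diagonal,
    Matrix.vecHead, Matrix.vecTail]
  rw [show l₁ = (u * v + φ * κ₀) / (v ^ 2 - g * φ) from rfl,
     show l₂ = (u * v - φ * κ₀) / (v ^ 2 - g * φ) from rfl,
     show l₃ = u / v from rfl]
  field_simp
  ring_nf
  have hs4 : s^4 = (g*φ)^2 := by rw [← hs2]; ring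
  rw [hs4, hs2]
  linear_combination (r*v*φ - u*φ) * hk2
end

section
/- Under the assumptions û, v̂, φ̂ > 0, g > 0, û² − gφ̂ ≥ c₂² and v̂² − gφ̂ ≥ c₂² for some c₂ > 0, the diagonal entries a₁ = (ûκ + √(gφ̂)v̂)/(2(û²+v̂²)κ), a₂ = (ûκ − √(gφ̂)v̂)/(2(û²+v̂²)κ), a₃ = û/(û²+v̂²), b₁ = (v̂κ + √(gφ̂)û)/(2(û²+v̂²)κ), b₂ = (v̂κ − √(gφ̂)û)/(2(û²+v̂²)κ), b₃ = v̂/(û²+v̂²) are all strictly positive, where κ = √(û² + v̂² − gφ̂). -/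
/-- positivity of the diagonal entries appearing in the
simultaneous diagonalization of the symmetrized supercritical shallow water
flux matrices. -/
theorem stmt_7 (g u v φ c₂ : ℝ) (hφ : 0 < φ) (hg : 0 < g) (hu : 0 < u)
    (hv : 0 < v) (hc : 0 < c₂)
    (h1 : c₂ ^ 2 ≤ u ^ 2 - g * φ) (h2 : c₂ ^ 2 ≤ v ^ 2 - g * φ) :
    let κ : ℝ := Real.sqrt (u ^ 2 + v ^ 2 - g * φ)
    let s : ℝ := Real.sqrt (g * φ)
    0 < (u * κ + s * v) / (2 * (u ^ 2 + v ^ 2) * κ) ∧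
    0 < (u * κ - s * v) / (2 * (u ^ 2 + v ^ 2) * κ) ∧
    0 < u / (u ^ 2 + v ^ 2) ∧
    0 < (v * κ + s * u) / (2 * (u ^ 2 + v ^ 2) * κ) ∧
    0 < (v * κ - s * u) / (2 * (u ^ 2 + v ^ 2) * κ) ∧
    0 < v / (u ^ 2 + v ^ 2) := by
  intro κ s
  have hc2 : (0:ℝ) < c₂ ^ 2 := by positivity
  have hgφ : 0 < g * φ := by positivity
  have hsum : 0 < u ^ 2 + v ^ 2 := by positivity
  have hk2 : 0 < u ^ 2 + v ^ 2 - g * φ := by nlinarith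
  have hκ : 0 < κ := Real.sqrt_pos.mpr hk2
  have hs : 0 < s := Real.sqrt_pos.mpr hgφ
  have hκsq : κ ^ 2 = u ^ 2 + v ^ 2 - g * φ := Real.sq_sqrt hk2.le
  have hssq : s ^ 2 = g * φ := Real.sq_sqrt hgφ.le
  have hden : 0 < 2 * (u ^ 2 + v ^ 2) * κ := by positivity
  have key1 : s * v < u * κ := by
    have hsq : (s * v) ^ 2 < (u * κ) ^ 2 := by nlinarith
    exact lt_of_pow_lt_pow_left₀ 2 (by positivity) hsq
  have key2 : s * u < v * κ := by
    have hsq : (s * u) ^ 2 < (v * κ) ^ 2 := by nlinarith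
    exact lt_of_pow_lt_pow_left₀ 2 (by positivity) hsq
  refine ⟨by positivity, div_pos (by linarith) hden, by positivity,
    by positivity, div_pos (by linarith) hden, by positivity⟩
end
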